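/- arXiv:2111.01643 — 4 statements merged into one kernel-verified Lean document; each statement's English description precedes it below -/
import Mathlib

section
/- For x = (ψ₁,ψ₂) ∈ H₁ × H₂ the following are equivalent: (i) B(x,x) = 0; (ii) Φ(x) = 0; (iii) p₁ψ₁ = ψ₁ (i.e. ψ₁ ∈ O₁), p₂ψ₂ = ψ₂ (i.e. ψ₂ ∈ O₂), and U(p₁ψ₁) + p₂ψ₂ = 0. In particular the set N = {x ∈ H₁ × H₂ : B(x,x) = 0} of null vectors of B is a closed complex-linear subspace of H₁ × H₂, namely the kernel of Φ. -/
open scoped InnerProductSpace ComplexConjugate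

noncomputable section

variable {H₁ H₂ : Type*}
  [NormedAddCommGroup H₁] [InnerProductSpace ℂ H₁]
  [NormedAddCommGroup H₂] [InnerProductSpace ℂ H₂]

/-- The pre-inner product `B` on `H₁ × H₂` of the minimally glued one-particle structure. -/
def gluedForm (O₁ : Submodule ℂ H₁) (O₂ : Submodule ℂ H₂)
    [Submodule.HasOrthogonalProjection O₁] [Submodule.HasOrthogonalProjection O₂]
    (U : O₁ ≃ₗᵢ[ℂ] O₂) (x y : H₁ × H₂) : ℂ :=
  ⟪x.1, y.1⟫_ℂ + ⟪x.2, y.2⟫_ℂ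
    + ⟪x.1, (U.symm (Submodule.orthogonalProjectionOnto O₂ y.2) : H₁)⟫_ℂ
    + ⟪x.2, (U (Submodule.orthogonalProjectionOnto O₁ y.1) : H₂)⟫_ℂ

/-- The map `Φ : H₁ × H₂ → H₁ × H₂ × H₂`,
`Φ(ψ₁,ψ₂) = (ψ₁ − p₁ψ₁, ψ₂ − p₂ψ₂, U(p₁ψ₁) + p₂ψ₂)`. -/
def gluedMap (O₁ : Submodule ℂ H₁) (O₂ : Submodule ℂ H₂)
    [Submodule.HasOrthogonalProjection O₁] [Submodule.HasOrthogonalProjection O₂]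
    (U : O₁ ≃ₗᵢ[ℂ] O₂) (x : H₁ × H₂) : H₁ × H₂ × H₂ :=
  (x.1 - (Submodule.orthogonalProjectionOnto O₁ x.1 : H₁),
   x.2 - (Submodule.orthogonalProjectionOnto O₂ x.2 : H₂),
   (U (Submodule.orthogonalProjectionOnto O₁ x.1) : H₂) + (Submodule.orthogonalProjectionOnto O₂ x.2 : H₂))

/-- `Φ` as a continuous linear map. -/
def gluedCLM (O₁ : Submodule ℂ H₁) (O₂ : Submodule ℂ H₂)
    [Submodule.HasOrthogonalProjection O₁] [Submodule.HasOrthogonalProjection O₂]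
    (U : O₁ ≃ₗᵢ[ℂ] O₂) : (H₁ × H₂) →L[ℂ] H₁ × H₂ × H₂ :=
  ((ContinuousLinearMap.fst ℂ H₁ H₂)
      - O₁.subtypeL.comp ((Submodule.orthogonalProjectionOnto O₁).comp (ContinuousLinearMap.fst ℂ H₁ H₂))).prod
    (((ContinuousLinearMap.snd ℂ H₁ H₂)
        - O₂.subtypeL.comp ((Submodule.orthogonalProjectionOnto O₂).comp (ContinuousLinearMap.snd ℂ H₁ H₂))).prod
      (O₂.subtypeL.comp (U.toLinearIsometry.toContinuousLinearMap.comp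
          ((Submodule.orthogonalProjectionOnto O₁).comp (ContinuousLinearMap.fst ℂ H₁ H₂)))
        + O₂.subtypeL.comp ((Submodule.orthogonalProjectionOnto O₂).comp (ContinuousLinearMap.snd ℂ H₁ H₂))))

lemma gluedCLM_apply (O₁ : Submodule ℂ H₁) (O₂ : Submodule ℂ H₂)
    [Submodule.HasOrthogonalProjection O₁] [Submodule.HasOrthogonalProjection O₂]
    (U : O₁ ≃ₗᵢ[ℂ] O₂) (x : H₁ × H₂) :
    gluedCLM O₁ O₂ U x = gluedMap O₁ O₂ U x := rfl

lemma inner_self_ofReal_sq {E : Type*} [NormedAddCommGroup E] [InnerProductSpace ℂ E]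
    (v : E) : ⟪v, v⟫_ℂ = ((‖v‖ ^ 2 : ℝ) : ℂ) := by
  rw [inner_self_eq_norm_sq_to_K]; norm_cast

lemma gluedForm_self (O₁ : Submodule ℂ H₁) (O₂ : Submodule ℂ H₂)
    [Submodule.HasOrthogonalProjection O₁] [Submodule.HasOrthogonalProjection O₂]
    (U : O₁ ≃ₗᵢ[ℂ] O₂) (x : H₁ × H₂) :
    gluedForm O₁ O₂ U x x =
      ((‖x.1 - (Submodule.orthogonalProjectionOnto O₁ x.1 : H₁)‖ ^ 2
        + ‖x.2 - (Submodule.orthogonalProjectionOnto O₂ x.2 : H₂)‖ ^ 2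
        + ‖(U (Submodule.orthogonalProjectionOnto O₁ x.1) : H₂)
            + (Submodule.orthogonalProjectionOnto O₂ x.2 : H₂)‖ ^ 2 : ℝ) : ℂ) := by
  set a := Submodule.orthogonalProjectionOnto O₁ x.1 with ha
  set b := Submodule.orthogonalProjectionOnto O₂ x.2 with hb
  have h1 : ⟪x.1, (a : H₁)⟫_ℂ = ⟪(a : H₁), (a : H₁)⟫_ℂ :=
    (Submodule.inner_orthogonalProjectionOnto_eq_of_mem_right (K := O₁) a x.1).symm.trans (O₁.coe_inner a a)
  have h2 : ⟪(a : H₁), x.1⟫_ℂ = ⟪(a : H₁), (a : H₁)⟫_ℂ :=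
    ((O₁.coe_inner a a).symm.trans (Submodule.inner_orthogonalProjectionOnto_eq_of_mem_left (K := O₁) a x.1)).symm
  have h3 : ⟪x.2, (b : H₂)⟫_ℂ = ⟪(b : H₂), (b : H₂)⟫_ℂ :=
    (Submodule.inner_orthogonalProjectionOnto_eq_of_mem_right (K := O₂) b x.2).symm.trans (O₂.coe_inner b b)
  have h4 : ⟪(b : H₂), x.2⟫_ℂ = ⟪(b : H₂), (b : H₂)⟫_ℂ :=
    ((O₂.coe_inner b b).symm.trans (Submodule.inner_orthogonalProjectionOnto_eq_of_mem_left (K := O₂) b x.2)).symm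
  have h5 : ⟪x.1, (U.symm b : H₁)⟫_ℂ = ⟪(U a : H₂), (b : H₂)⟫_ℂ := by
    rw [← Submodule.inner_orthogonalProjectionOnto_eq_of_mem_right (K := O₁) (U.symm b) x.1, ← ha,
      ← U.inner_map_map a (U.symm b), U.apply_symm_apply, O₂.coe_inner]
  have h6 : ⟪x.2, (U a : H₂)⟫_ℂ = ⟪(b : H₂), (U a : H₂)⟫_ℂ := by
    rw [← Submodule.inner_orthogonalProjectionOnto_eq_of_mem_right (K := O₂) (U a) x.2, ← hb, O₂.coe_inner]
  have h7 : ⟪(U a : H₂), (U a : H₂)⟫_ℂ = ⟪(a : H₁), (a : H₁)⟫_ℂ := by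
    rw [← O₂.coe_inner, U.inner_map_map, O₁.coe_inner]
  rw [Complex.ofReal_add, Complex.ofReal_add, ← inner_self_ofReal_sq, ← inner_self_ofReal_sq,
    ← inner_self_ofReal_sq]
  simp only [gluedForm, inner_sub_left, inner_sub_right, inner_add_left, inner_add_right,
    ← ha, ← hb, h1, h2, h3, h4, h5, h6, h7]
  ring

/-- Characterization of the null vectors of `B`: (i) `B(x,x) = 0` iff (ii) `Φ x = 0` iff
(iii) `p₁ψ₁ = ψ₁`, `p₂ψ₂ = ψ₂` and `U(p₁ψ₁) + p₂ψ₂ = 0`; moreover the set of null vectors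
is a closed complex-linear subspace of `H₁ × H₂`, namely the kernel of `Φ`. -/
theorem gluedForm_null_vectors (O₁ : Submodule ℂ H₁) (O₂ : Submodule ℂ H₂)
    [Submodule.HasOrthogonalProjection O₁] [Submodule.HasOrthogonalProjection O₂]
    (U : O₁ ≃ₗᵢ[ℂ] O₂) :
    (∀ x : H₁ × H₂,
      (gluedForm O₁ O₂ U x x = 0 ↔ gluedMap O₁ O₂ U x = 0)
      ∧ (gluedForm O₁ O₂ U x x = 0 ↔
          ((Submodule.orthogonalProjectionOnto O₁ x.1 : H₁) = x.1
            ∧ (Submodule.orthogonalProjectionOnto O₂ x.2 : H₂) = x.2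
            ∧ (U (Submodule.orthogonalProjectionOnto O₁ x.1) : H₂)
                + (Submodule.orthogonalProjectionOnto O₂ x.2 : H₂) = 0)))
    ∧ ({x : H₁ × H₂ | gluedForm O₁ O₂ U x x = 0}
        = {x : H₁ × H₂ | gluedMap O₁ O₂ U x = 0})
    ∧ (∃ S : Submodule ℂ (H₁ × H₂),
        (S : Set (H₁ × H₂)) = {x : H₁ × H₂ | gluedForm O₁ O₂ U x x = 0}
        ∧ IsClosed (S : Set (H₁ × H₂))) := by
  have key : ∀ x : H₁ × H₂, gluedForm O₁ O₂ U x x = 0 ↔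
      ((Submodule.orthogonalProjectionOnto O₁ x.1 : H₁) = x.1
        ∧ (Submodule.orthogonalProjectionOnto O₂ x.2 : H₂) = x.2
        ∧ (U (Submodule.orthogonalProjectionOnto O₁ x.1) : H₂)
            + (Submodule.orthogonalProjectionOnto O₂ x.2 : H₂) = 0) := by
    intro x
    rw [gluedForm_self, Complex.ofReal_eq_zero]
    constructor
    · intro h
      have n1 := sq_nonneg ‖x.1 - (Submodule.orthogonalProjectionOnto O₁ x.1 : H₁)‖
      have n2 := sq_nonneg ‖x.2 - (Submodule.orthogonalProjectionOnto O₂ x.2 : H₂)‖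
      have n3 := sq_nonneg ‖(U (Submodule.orthogonalProjectionOnto O₁ x.1) : H₂)
          + (Submodule.orthogonalProjectionOnto O₂ x.2 : H₂)‖
      refine ⟨?_, ?_, ?_⟩
      · have : ‖x.1 - (Submodule.orthogonalProjectionOnto O₁ x.1 : H₁)‖ = 0 := by nlinarith
        rw [norm_eq_zero, sub_eq_zero] at this
        exact this.symm
      · have : ‖x.2 - (Submodule.orthogonalProjectionOnto O₂ x.2 : H₂)‖ = 0 := by nlinarith
        rw [norm_eq_zero, sub_eq_zero] at this
        exact this.symm
      · have : ‖(U (Submodule.orthogonalProjectionOnto O₁ x.1) : H₂)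
            + (Submodule.orthogonalProjectionOnto O₂ x.2 : H₂)‖ = 0 := by nlinarith
        rwa [norm_eq_zero] at this
    · rintro ⟨e1, e2, e3⟩
      rw [e3, e1, e2]
      simp
  have keyMap : ∀ x : H₁ × H₂, gluedMap O₁ O₂ U x = 0 ↔
      ((Submodule.orthogonalProjectionOnto O₁ x.1 : H₁) = x.1
        ∧ (Submodule.orthogonalProjectionOnto O₂ x.2 : H₂) = x.2
        ∧ (U (Submodule.orthogonalProjectionOnto O₁ x.1) : H₂)
            + (Submodule.orthogonalProjectionOnto O₂ x.2 : H₂) = 0) := by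
    intro x
    simp only [gluedMap, Prod.ext_iff, Prod.fst_zero, Prod.snd_zero, sub_eq_zero]
    constructor
    · rintro ⟨a1, a2, a3⟩; exact ⟨a1.symm, a2.symm, a3⟩
    · rintro ⟨a1, a2, a3⟩; exact ⟨a1.symm, a2.symm, a3⟩
  refine ⟨fun x => ⟨(key x).trans (keyMap x).symm, key x⟩, ?_, ?_⟩
  · ext x; exact (key x).trans (keyMap x).symm
  · refine ⟨LinearMap.ker (gluedCLM O₁ O₂ U : (H₁ × H₂) →ₗ[ℂ] H₁ × H₂ × H₂), ?_, ?_⟩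
    · ext x
      simp only [SetLike.mem_coe, LinearMap.mem_ker, Set.mem_setOf_eq,
        ContinuousLinearMap.coe_coe, gluedCLM_apply]
      exact ((key x).trans (keyMap x).symm).symm
    · exact ContinuousLinearMap.isClosed_ker _


end
end

section
/- The range of the linear map Φ is exactly O₁ᗮ × O₂ᗮ × O₂, where Oᵢᗮ denotes the orthogonal complement of Oᵢ in Hᵢ; that is, Φ maps H₁ × H₂ onto O₁ᗮ × O₂ᗮ × O₂. Consequently, the quotient of H₁ × H₂ by the null space of B, equipped with the inner product induced by B, is unitarily equivalent (via the map induced by Φ) to the Hilbert space O₁ᗮ × O₂ᗮ × O₂. -/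
open scoped InnerProductSpace ComplexConjugate

noncomputable section

variable {H₁ H₂ : Type*}
  [NormedAddCommGroup H₁] [InnerProductSpace ℂ H₁]
  [NormedAddCommGroup H₂] [InnerProductSpace ℂ H₂]

/-- The inner product of the product Hilbert space `H₁ × H₂ × H₂`. -/
def prodInner (x y : H₁ × H₂ × H₂) : ℂ :=
  ⟪x.1, y.1⟫_ℂ + ⟪x.2.1, y.2.1⟫_ℂ + ⟪x.2.2, y.2.2⟫_ℂ

-- auxiliary lemmas


lemma inner_orthProj_right {H : Type*} [NormedAddCommGroup H] [InnerProductSpace ℂ H]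
    (K : Submodule ℂ H) [Submodule.HasOrthogonalProjection K] (u v : H) :
    ⟪u, (Submodule.orthogonalProjectionOnto K v : H)⟫_ℂ
      = ⟪(Submodule.orthogonalProjectionOnto K u : H), (Submodule.orthogonalProjectionOnto K v : H)⟫_ℂ := by
  rw [show ⟪(K.orthogonalProjectionOnto u : H), (K.orthogonalProjectionOnto v : H)⟫_ℂ
      = ⟪u, (K.orthogonalProjectionOnto (K.orthogonalProjectionOnto v : H) : H)⟫_ℂ from
      K.inner_starProjection_left_eq_right u _,
    Submodule.orthogonalProjectionOnto_mem_subspace_eq_self]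

lemma inner_orthProj_left {H : Type*} [NormedAddCommGroup H] [InnerProductSpace ℂ H]
    (K : Submodule ℂ H) [Submodule.HasOrthogonalProjection K] (u v : H) :
    ⟪(Submodule.orthogonalProjectionOnto K u : H), v⟫_ℂ
      = ⟪(Submodule.orthogonalProjectionOnto K u : H), (Submodule.orthogonalProjectionOnto K v : H)⟫_ℂ := by
  rw [show ⟪(K.orthogonalProjectionOnto u : H), v⟫_ℂ = ⟪u, (K.orthogonalProjectionOnto v : H)⟫_ℂ from
    K.inner_starProjection_left_eq_right u v, inner_orthProj_right]

lemma gluedMap_isometry (O₁ : Submodule ℂ H₁) (O₂ : Submodule ℂ H₂)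
    [Submodule.HasOrthogonalProjection O₁] [Submodule.HasOrthogonalProjection O₂]
    (U : O₁ ≃ₗᵢ[ℂ] O₂) (x y : H₁ × H₂) :
    prodInner (gluedMap O₁ O₂ U x) (gluedMap O₁ O₂ U y) = gluedForm O₁ O₂ U x y := by
  set p₁x := Submodule.orthogonalProjectionOnto O₁ x.1 with hp₁x
  set p₁y := Submodule.orthogonalProjectionOnto O₁ y.1 with hp₁y
  set p₂x := Submodule.orthogonalProjectionOnto O₂ x.2 with hp₂x
  set p₂y := Submodule.orthogonalProjectionOnto O₂ y.2 with hp₂y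
  have hB : ⟪(U p₁x : H₂), (U p₁y : H₂)⟫_ℂ = ⟪(p₁x : H₁), (p₁y : H₁)⟫_ℂ := by
    rw [← O₂.coe_inner, U.inner_map_map, O₁.coe_inner]
  have hC : ⟪(U p₁x : H₂), (p₂y : H₂)⟫_ℂ = ⟪x.1, (U.symm p₂y : H₁)⟫_ℂ := by
    have : ⟪(U p₁x : H₂), (p₂y : H₂)⟫_ℂ = ⟪(p₁x : H₁), (U.symm p₂y : H₁)⟫_ℂ := by
      rw [← O₂.coe_inner, ← O₁.coe_inner, ← U.inner_map_map p₁x (U.symm p₂y),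
        U.apply_symm_apply]
    rw [this, hp₁x, inner_orthProj_left, ← inner_orthProj_right,
      Submodule.orthogonalProjectionOnto_mem_subspace_eq_self]
  have hD : ⟪(p₂x : H₂), (U p₁y : H₂)⟫_ℂ = ⟪x.2, (U p₁y : H₂)⟫_ℂ := by
    rw [hp₂x, inner_orthProj_left, ← inner_orthProj_right,
      Submodule.orthogonalProjectionOnto_mem_subspace_eq_self]
  have h1 : ⟪x.1, (p₁y : H₁)⟫_ℂ = ⟪(p₁x : H₁), (p₁y : H₁)⟫_ℂ := inner_orthProj_right _ _ _
  have h1' : ⟪(p₁x : H₁), y.1⟫_ℂ = ⟪(p₁x : H₁), (p₁y : H₁)⟫_ℂ := inner_orthProj_left _ _ _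
  have h2 : ⟪x.2, (p₂y : H₂)⟫_ℂ = ⟪(p₂x : H₂), (p₂y : H₂)⟫_ℂ := inner_orthProj_right _ _ _
  have h2' : ⟪(p₂x : H₂), y.2⟫_ℂ = ⟪(p₂x : H₂), (p₂y : H₂)⟫_ℂ := inner_orthProj_left _ _ _
  simp only [prodInner, gluedMap, gluedForm, inner_sub_left, inner_sub_right,
    inner_add_left, inner_add_right, ← hp₁x, ← hp₁y, ← hp₂x, ← hp₂y]
  rw [hB, hC, hD, h1, h1', h2, h2']
  ring

lemma gluedMap_sub (O₁ : Submodule ℂ H₁) (O₂ : Submodule ℂ H₂)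
    [Submodule.HasOrthogonalProjection O₁] [Submodule.HasOrthogonalProjection O₂]
    (U : O₁ ≃ₗᵢ[ℂ] O₂) (x y : H₁ × H₂) :
    gluedMap O₁ O₂ U (x - y) = gluedMap O₁ O₂ U x - gluedMap O₁ O₂ U y := by
  simp only [gluedMap, Prod.fst_sub, Prod.snd_sub, map_sub, Submodule.coe_sub, Prod.mk_sub_mk]
  simp only [Prod.mk.injEq]
  refine ⟨by abel, by abel, by abel⟩

lemma prodInner_self_eq_zero (z : H₁ × H₂ × H₂) (h : prodInner z z = 0) : z = 0 := by
  simp only [prodInner] at h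
  rw [inner_self_eq_norm_sq_to_K, inner_self_eq_norm_sq_to_K, inner_self_eq_norm_sq_to_K] at h
  have h'' : ((‖z.1‖ ^ 2 + ‖z.2.1‖ ^ 2 + ‖z.2.2‖ ^ 2 : ℝ) : ℂ) = 0 := by push_cast; exact h
  have h' : ‖z.1‖ ^ 2 + ‖z.2.1‖ ^ 2 + ‖z.2.2‖ ^ 2 = 0 := by exact_mod_cast h''
  have e1 : ‖z.1‖ = 0 := by nlinarith [sq_nonneg ‖z.1‖, sq_nonneg ‖z.2.1‖, sq_nonneg ‖z.2.2‖, norm_nonneg z.1]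
  have e2 : ‖z.2.1‖ = 0 := by nlinarith [sq_nonneg ‖z.1‖, sq_nonneg ‖z.2.1‖, sq_nonneg ‖z.2.2‖, norm_nonneg z.2.1]
  have e3 : ‖z.2.2‖ = 0 := by nlinarith [sq_nonneg ‖z.1‖, sq_nonneg ‖z.2.1‖, sq_nonneg ‖z.2.2‖, norm_nonneg z.2.2]
  have : z = (z.1, z.2.1, z.2.2) := rfl
  rw [this, norm_eq_zero.mp e1, norm_eq_zero.mp e2, norm_eq_zero.mp e3]
  rfl


/-- The range of `Φ` is exactly `O₁ᗮ × O₂ᗮ × O₂`; moreover `Φ` identifies two vectors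
precisely when their difference is a null vector of `B`, and it carries `B` to the inner
product of the product Hilbert space `O₁ᗮ × O₂ᗮ × O₂ ⊆ H₁ × H₂ × H₂`.  Hence the quotient
of `H₁ × H₂` by the null space of `B`, with the inner product induced by `B`, is unitarily
equivalent via the map induced by `Φ` to the Hilbert space `O₁ᗮ × O₂ᗮ × O₂`. -/
theorem gluedMap_range (O₁ : Submodule ℂ H₁) (O₂ : Submodule ℂ H₂)
    [Submodule.HasOrthogonalProjection O₁] [Submodule.HasOrthogonalProjection O₂]
    (U : O₁ ≃ₗᵢ[ℂ] O₂) :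
    Set.range (gluedMap O₁ O₂ U)
      = {z : H₁ × H₂ × H₂ | z.1 ∈ O₁ᗮ ∧ z.2.1 ∈ O₂ᗮ ∧ z.2.2 ∈ O₂}
    ∧ (∀ x y : H₁ × H₂, gluedMap O₁ O₂ U x = gluedMap O₁ O₂ U y
        ↔ gluedForm O₁ O₂ U (x - y) (x - y) = 0)
    ∧ (∀ x y : H₁ × H₂,
        prodInner (gluedMap O₁ O₂ U x) (gluedMap O₁ O₂ U y) = gluedForm O₁ O₂ U x y) := by
  refine ⟨?_, ?_, gluedMap_isometry O₁ O₂ U⟩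
  · ext z
    constructor
    · rintro ⟨x, rfl⟩
      exact ⟨Submodule.sub_starProjection_mem_orthogonal (K := O₁) x.1,
        Submodule.sub_starProjection_mem_orthogonal (K := O₂) x.2,
        add_mem (SetLike.coe_mem _) (SetLike.coe_mem _)⟩
    · rintro ⟨h1, h2, h3⟩
      refine ⟨(z.1 + (U.symm ⟨z.2.2, h3⟩ : H₁), z.2.1), ?_⟩
      have e1 : Submodule.orthogonalProjectionOnto O₁ (z.1 + (U.symm ⟨z.2.2, h3⟩ : H₁))
          = U.symm ⟨z.2.2, h3⟩ := by
        rw [map_add, Submodule.orthogonalProjectionOnto_apply_of_mem_orthogonal h1,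
          Submodule.orthogonalProjectionOnto_mem_subspace_eq_self, zero_add]
      have e2 : Submodule.orthogonalProjectionOnto O₂ z.2.1 = 0 :=
        Submodule.orthogonalProjectionOnto_apply_of_mem_orthogonal h2
      simp only [gluedMap, e1, e2]
      refine Prod.ext ?_ (Prod.ext ?_ ?_) <;> simp [U.apply_symm_apply]
  · intro x y
    constructor
    · intro h
      rw [← gluedMap_isometry O₁ O₂ U, gluedMap_sub, h, sub_self]
      simp [prodInner]
    · intro h
      rw [← gluedMap_isometry O₁ O₂ U, gluedMap_sub] at h
      have := prodInner_self_eq_zero _ h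
      exact sub_eq_zero.mp this


end
end

section
/- The seminorm induced by B on H₁ × H₂ is complete modulo null vectors: if (xₙ) is a sequence in H₁ × H₂ that is Cauchy with respect to B, i.e. for every ε > 0 there exists N such that B(xₙ − xₘ, xₙ − xₘ) < ε for all n, m ≥ N, then there exists x ∈ H₁ × H₂ such that B(xₙ − x, xₙ − x) → 0 as n → ∞. Hence the quotient of H₁ × H₂ by the null space {x : B(x,x) = 0}, with the inner product induced by B, is a Hilbert space. -/
open scoped InnerProductSpace ComplexConjugate

noncomputable section

variable {H₁ H₂ : Type*}
  [NormedAddCommGroup H₁] [InnerProductSpace ℂ H₁] [CompleteSpace H₁]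
  [NormedAddCommGroup H₂] [InnerProductSpace ℂ H₂] [CompleteSpace H₂]

lemma gluedForm_re_eq (O₁ : Submodule ℂ H₁) (O₂ : Submodule ℂ H₂)
    [Submodule.HasOrthogonalProjection O₁] [Submodule.HasOrthogonalProjection O₂]
    (U : O₁ ≃ₗᵢ[ℂ] O₂) (z : H₁ × H₂) :
    (gluedForm O₁ O₂ U z z).re =
      ‖z.1 - (Submodule.orthogonalProjectionOnto O₁ z.1 : H₁)‖ ^ 2
      + ‖z.2 - (Submodule.orthogonalProjectionOnto O₂ z.2 : H₂)‖ ^ 2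
      + ‖((Submodule.orthogonalProjectionOnto O₁ z.1 : H₁) + (U.symm (Submodule.orthogonalProjectionOnto O₂ z.2) : H₁))‖ ^ 2 := by
  set p := (Submodule.orthogonalProjectionOnto O₁ z.1 : H₁) with hp
  set q := (Submodule.orthogonalProjectionOnto O₂ z.2 : H₂) with hqd
  set w := (U.symm (Submodule.orthogonalProjectionOnto O₂ z.2) : H₁) with hw
  have h1 : ‖z.1‖ ^ 2 = ‖z.1 - p‖ ^ 2 + ‖p‖ ^ 2 := by
    have h0 : ⟪z.1 - p, p⟫_ℂ = 0 :=
      Submodule.starProjection_inner_eq_zero z.1 p (Submodule.coe_mem _)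
    have := norm_add_sq (𝕜 := ℂ) (z.1 - p) p
    rw [h0] at this
    simpa using this
  have h2 : ‖z.2‖ ^ 2 = ‖z.2 - q‖ ^ 2 + ‖q‖ ^ 2 := by
    have h0 : ⟪z.2 - q, q⟫_ℂ = 0 :=
      Submodule.starProjection_inner_eq_zero z.2 q (Submodule.coe_mem _)
    have := norm_add_sq (𝕜 := ℂ) (z.2 - q) q
    rw [h0] at this
    simpa using this
  have hq : ‖q‖ ^ 2 = ‖w‖ ^ 2 := by
    have : ‖w‖ = ‖q‖ := by
      rw [hw, hqd, Submodule.norm_coe, LinearIsometryEquiv.norm_map, ← Submodule.norm_coe]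
    rw [this]
  have h3 : ⟪z.1, w⟫_ℂ = ⟪p, w⟫_ℂ := by
    have h0 : ⟪z.1 - p, w⟫_ℂ = 0 :=
      Submodule.starProjection_inner_eq_zero z.1 w (Submodule.coe_mem _)
    rw [inner_sub_left, sub_eq_zero] at h0
    exact h0
  have h4 : ⟪z.2, (U (Submodule.orthogonalProjectionOnto O₁ z.1) : H₂)⟫_ℂ = ⟪w, p⟫_ℂ := by
    have h0 : ⟪z.2 - q, (U (Submodule.orthogonalProjectionOnto O₁ z.1) : H₂)⟫_ℂ = 0 :=
      Submodule.starProjection_inner_eq_zero z.2 _ (Submodule.coe_mem _)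
    rw [inner_sub_left, sub_eq_zero] at h0
    rw [h0]
    calc ⟪q, (U (Submodule.orthogonalProjectionOnto O₁ z.1) : H₂)⟫_ℂ
        = ⟪(Submodule.orthogonalProjectionOnto O₂ z.2 : O₂), U (Submodule.orthogonalProjectionOnto O₁ z.1)⟫_ℂ :=
          (Submodule.coe_inner O₂ _ _).symm
      _ = ⟪U.symm (Submodule.orthogonalProjectionOnto O₂ z.2), U.symm (U (Submodule.orthogonalProjectionOnto O₁ z.1))⟫_ℂ :=
          (U.symm.inner_map_map _ _).symm
      _ = ⟪U.symm (Submodule.orthogonalProjectionOnto O₂ z.2), Submodule.orthogonalProjectionOnto O₁ z.1⟫_ℂ := by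
          rw [U.symm_apply_apply]
      _ = ⟪w, p⟫_ℂ := Submodule.coe_inner O₁ _ _
  have hnorm : ‖p + w‖ ^ 2 = ‖p‖ ^ 2 + ‖w‖ ^ 2 + 2 * (⟪p, w⟫_ℂ).re := by
    have := norm_add_sq (𝕜 := ℂ) p w
    rw [RCLike.re_to_complex] at this
    linarith
  have hre : (⟪w, p⟫_ℂ).re = (⟪p, w⟫_ℂ).re := by
    rw [← inner_conj_symm p w, Complex.conj_re]
  have e1 : (⟪z.1, z.1⟫_ℂ).re = ‖z.1‖ ^ 2 := by
    have := inner_self_eq_norm_sq (𝕜 := ℂ) z.1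
    rwa [RCLike.re_to_complex] at this
  have e2 : (⟪z.2, z.2⟫_ℂ).re = ‖z.2‖ ^ 2 := by
    have := inner_self_eq_norm_sq (𝕜 := ℂ) z.2
    rwa [RCLike.re_to_complex] at this
  simp only [gluedForm, Complex.add_re, h3, h4]
  rw [e1, e2]
  have h3' : (⟪z.1, (U.symm (Submodule.orthogonalProjectionOnto O₂ z.2) : H₁)⟫_ℂ).re = (⟪p, w⟫_ℂ).re :=
    congrArg Complex.re h3
  linarith


lemma gluedForm_cauchy_aux {E : Type*} [NormedAddCommGroup E]
    (O₁ : Submodule ℂ H₁) (O₂ : Submodule ℂ H₂)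
    [Submodule.HasOrthogonalProjection O₁] [Submodule.HasOrthogonalProjection O₂]
    (U : O₁ ≃ₗᵢ[ℂ] O₂) (x : ℕ → H₁ × H₂)
    (hx : ∀ ε : ℝ, 0 < ε → ∃ N : ℕ, ∀ n m : ℕ, N ≤ n → N ≤ m →
      (gluedForm O₁ O₂ U (x n - x m) (x n - x m)).re < ε)
    (f : H₁ × H₂ → E)
    (hsub : ∀ u v : H₁ × H₂, f (u - v) = f u - f v)
    (hbd : ∀ z, ‖f z‖ ^ 2 ≤ (gluedForm O₁ O₂ U z z).re) :
    CauchySeq (fun n => f (x n)) := by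
  rw [Metric.cauchySeq_iff]
  intro ε hε
  obtain ⟨N, hN⟩ := hx (ε ^ 2) (by positivity)
  refine ⟨N, fun n hn m hm => ?_⟩
  have h1 := hbd (x n - x m)
  rw [hsub] at h1
  have h3 : ‖f (x n) - f (x m)‖ ^ 2 < ε ^ 2 := lt_of_le_of_lt h1 (hN n m hn hm)
  have h4 : ‖f (x n) - f (x m)‖ < ε := lt_of_pow_lt_pow_left₀ 2 hε.le h3
  rwa [dist_eq_norm]

/-- Completeness of the seminorm induced by `B` modulo null vectors: every sequence in
`H₁ × H₂` that is Cauchy with respect to `B` converges with respect to `B` to some element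
of `H₁ × H₂`.  Hence the quotient of `H₁ × H₂` by the null space of `B`, with the inner
product induced by `B`, is a Hilbert space. -/
theorem gluedForm_complete (O₁ : Submodule ℂ H₁) (O₂ : Submodule ℂ H₂)
    [Submodule.HasOrthogonalProjection O₁] [Submodule.HasOrthogonalProjection O₂]
    (U : O₁ ≃ₗᵢ[ℂ] O₂) (x : ℕ → H₁ × H₂)
    (hx : ∀ ε : ℝ, 0 < ε → ∃ N : ℕ, ∀ n m : ℕ, N ≤ n → N ≤ m →
      (gluedForm O₁ O₂ U (x n - x m) (x n - x m)).re < ε) :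
    ∃ l : H₁ × H₂,
      Filter.Tendsto (fun n => (gluedForm O₁ O₂ U (x n - l) (x n - l)).re)
        Filter.atTop (nhds 0) := by
  set f₁ : H₁ × H₂ → H₁ := fun z => z.1 - (Submodule.orthogonalProjectionOnto O₁ z.1 : H₁) with hf₁
  set f₂ : H₁ × H₂ → H₂ := fun z => z.2 - (Submodule.orthogonalProjectionOnto O₂ z.2 : H₂) with hf₂
  set f₃ : H₁ × H₂ → H₁ :=
    fun z => (Submodule.orthogonalProjectionOnto O₁ z.1 : H₁) + (U.symm (Submodule.orthogonalProjectionOnto O₂ z.2) : H₁)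
    with hf₃
  have hs₁ : ∀ u v : H₁ × H₂, f₁ (u - v) = f₁ u - f₁ v := by
    intro u v
    simp only [hf₁, Prod.fst_sub, map_sub, Submodule.coe_sub]
    abel
  have hs₂ : ∀ u v : H₁ × H₂, f₂ (u - v) = f₂ u - f₂ v := by
    intro u v
    simp only [hf₂, Prod.snd_sub, map_sub, Submodule.coe_sub]
    abel
  have hs₃ : ∀ u v : H₁ × H₂, f₃ (u - v) = f₃ u - f₃ v := by
    intro u v
    simp only [hf₃, Prod.fst_sub, Prod.snd_sub, map_sub, Submodule.coe_sub]
    abel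
  -- each component sequence is Cauchy
  have hb : ∀ z : H₁ × H₂, ‖f₁ z‖ ^ 2 ≤ (gluedForm O₁ O₂ U z z).re ∧
      ‖f₂ z‖ ^ 2 ≤ (gluedForm O₁ O₂ U z z).re ∧
      ‖f₃ z‖ ^ 2 ≤ (gluedForm O₁ O₂ U z z).re := by
    intro z
    rw [gluedForm_re_eq]
    refine ⟨?_, ?_, ?_⟩ <;> nlinarith [sq_nonneg ‖f₁ z‖, sq_nonneg ‖f₂ z‖, sq_nonneg ‖f₃ z‖]
  have hc₁ : CauchySeq (fun n => f₁ (x n)) := gluedForm_cauchy_aux O₁ O₂ U x hx f₁ hs₁ (fun z => (hb z).1)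
  have hc₂ : CauchySeq (fun n => f₂ (x n)) := gluedForm_cauchy_aux O₁ O₂ U x hx f₂ hs₂ (fun z => (hb z).2.1)
  have hc₃ : CauchySeq (fun n => f₃ (x n)) := gluedForm_cauchy_aux O₁ O₂ U x hx f₃ hs₃ (fun z => (hb z).2.2)
  obtain ⟨a, ha⟩ := cauchySeq_tendsto_of_complete hc₁
  obtain ⟨b, hbt⟩ := cauchySeq_tendsto_of_complete hc₂
  obtain ⟨c, hct⟩ := cauchySeq_tendsto_of_complete hc₃
  have hO₁closed : IsClosed (O₁ : Set H₁) := by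
    rw [← Submodule.orthogonal_orthogonal O₁]
    exact Submodule.isClosed_orthogonal O₁ᗮ
  have haO : a ∈ O₁ᗮ :=
    (Submodule.isClosed_orthogonal O₁).mem_of_tendsto ha
      (Filter.Eventually.of_forall fun n => Submodule.sub_starProjection_mem_orthogonal (x n).1)
  have hbO : b ∈ O₂ᗮ :=
    (Submodule.isClosed_orthogonal O₂).mem_of_tendsto hbt
      (Filter.Eventually.of_forall fun n => Submodule.sub_starProjection_mem_orthogonal (x n).2)
  have hcO : c ∈ O₁ :=
    hO₁closed.mem_of_tendsto hct
      (Filter.Eventually.of_forall fun n =>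
        O₁.add_mem (Submodule.coe_mem _) (Submodule.coe_mem _))
  -- projections of limit pieces
  have hpa : (Submodule.orthogonalProjectionOnto O₁ a : H₁) = 0 := by
    rw [Submodule.orthogonalProjectionOnto_apply_of_mem_orthogonal haO]
    simp
  have hpb : (Submodule.orthogonalProjectionOnto O₂ b : H₂) = 0 := by
    rw [Submodule.orthogonalProjectionOnto_apply_of_mem_orthogonal hbO]
    simp
  have hpc : (Submodule.orthogonalProjectionOnto O₁ c : H₁) = c :=
    Submodule.starProjection_eq_self_iff.mpr hcO
  refine ⟨(a + c, b), ?_⟩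
  set l : H₁ × H₂ := (a + c, b) with hl
  have hfl₁ : f₁ l = a := by
    simp only [hf₁, hl, map_add, Submodule.coe_add, hpa, hpc]
    abel
  have hfl₂ : f₂ l = b := by
    simp only [hf₂, hl, hpb]
    abel
  have hfl₃ : f₃ l = c := by
    show (Submodule.orthogonalProjectionOnto O₁ (a + c) : H₁) + (U.symm (Submodule.orthogonalProjectionOnto O₂ b) : H₁) = c
    have h5 : Submodule.orthogonalProjectionOnto O₂ b = 0 :=
      Submodule.orthogonalProjectionOnto_apply_of_mem_orthogonal hbO
    rw [h5, map_zero, map_add]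
    simp only [Submodule.coe_add, hpa, hpc, ZeroMemClass.coe_zero]
    abel
  have hkey : ∀ n, (gluedForm O₁ O₂ U (x n - l) (x n - l)).re
      = ‖f₁ (x n) - a‖ ^ 2 + ‖f₂ (x n) - b‖ ^ 2 + ‖f₃ (x n) - c‖ ^ 2 := by
    intro n
    rw [gluedForm_re_eq]
    have e1 : (x n - l).1 - (Submodule.orthogonalProjectionOnto O₁ (x n - l).1 : H₁) = f₁ (x n) - a := by
      rw [← hfl₁]; exact congrArg (fun t => t) (hs₁ (x n) l) ▸ (hs₁ (x n) l)
    have e2 : (x n - l).2 - (Submodule.orthogonalProjectionOnto O₂ (x n - l).2 : H₂) = f₂ (x n) - b := by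
      rw [← hfl₂]; exact hs₂ (x n) l
    have e3 : (Submodule.orthogonalProjectionOnto O₁ (x n - l).1 : H₁)
        + (U.symm (Submodule.orthogonalProjectionOnto O₂ (x n - l).2) : H₁) = f₃ (x n) - c := by
      rw [← hfl₃]; exact hs₃ (x n) l
    rw [e1, e2, e3]
  simp only [hkey]
  have t1 : Filter.Tendsto (fun n => ‖f₁ (x n) - a‖ ^ 2) Filter.atTop (nhds 0) := by
    have := (tendsto_iff_norm_sub_tendsto_zero.mp ha).pow 2
    simpa using this
  have t2 : Filter.Tendsto (fun n => ‖f₂ (x n) - b‖ ^ 2) Filter.atTop (nhds 0) := by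
    have := (tendsto_iff_norm_sub_tendsto_zero.mp hbt).pow 2
    simpa using this
  have t3 : Filter.Tendsto (fun n => ‖f₃ (x n) - c‖ ^ 2) Filter.atTop (nhds 0) := by
    have := (tendsto_iff_norm_sub_tendsto_zero.mp hct).pow 2
    simpa using this
  simpa using (t1.add t2).add t3

end
end

section
/- The glued map is well defined: for all f₁, g₁ ∈ V₁ and f₂, g₂ ∈ V₂ with f₁ + f₂ = g₁ + g₂ in V, the element ((K₁f₁ − K₁g₁), (K₂f₂ − K₂g₂)) of H₁ × H₂ is a null vector of B, i.e. B((K₁(f₁−g₁), K₂(f₂−g₂)), (K₁(f₁−g₁), K₂(f₂−g₂))) = 0; equivalently Φ(K₁f₁, K₂f₂) = Φ(K₁g₁, K₂g₂). Consequently the assignment K̃(f) = Φ(K₁f₁, K₂f₂), for any decomposition f = f₁ + f₂ with f₁ ∈ V₁, f₂ ∈ V₂, is a well-defined real-linear map on the subspace V₁ + V₂ of V. -/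
open scoped InnerProductSpace ComplexConjugate

noncomputable section

variable {H₁ H₂ : Type*}
  [NormedAddCommGroup H₁] [InnerProductSpace ℂ H₁]
  [NormedAddCommGroup H₂] [InnerProductSpace ℂ H₂]

/-- `Φ` as a `ℂ`-linear map. -/
def gluedMapₗ (O₁ : Submodule ℂ H₁) (O₂ : Submodule ℂ H₂)
    [Submodule.HasOrthogonalProjection O₁] [Submodule.HasOrthogonalProjection O₂]
    (U : O₁ ≃ₗᵢ[ℂ] O₂) : (H₁ × H₂) →ₗ[ℂ] H₁ × H₂ × H₂ where
  toFun := gluedMap O₁ O₂ U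
  map_add' x y := by
    simp only [gluedMap, Prod.fst_add, Prod.snd_add, map_add, Submodule.coe_add, Prod.mk_add_mk,
      Prod.mk.injEq]
    refine ⟨by abel, by abel, by abel⟩
  map_smul' c x := by
    simp only [gluedMap, Prod.smul_fst, Prod.smul_snd, map_smul, Submodule.coe_smul,
      Prod.smul_mk, RingHom.id_apply, smul_sub, smul_add]

/-- The glued map `K̃` is well defined: for a compatible pair `(K₁, K₂)`, if
`f₁ + f₂ = g₁ + g₂` then `(K₁f₁ − K₁g₁, K₂f₂ − K₂g₂)` is a null vector of `B`, equivalently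
`Φ(K₁f₁, K₂f₂) = Φ(K₁g₁, K₂g₂)`; consequently `f ↦ Φ(K₁f₁, K₂f₂)` (for any decomposition
`f = f₁ + f₂`) is a well-defined real-linear map on the subspace `V₁ + V₂` of `V`. -/
theorem gluedMap_well_defined (O₁ : Submodule ℂ H₁) (O₂ : Submodule ℂ H₂)
    [Submodule.HasOrthogonalProjection O₁] [Submodule.HasOrthogonalProjection O₂]
    (U : O₁ ≃ₗᵢ[ℂ] O₂)
    {V : Type*} [AddCommGroup V] [Module ℝ V] (V₁ V₂ : Submodule ℝ V)
    (K₁ : V₁ →ₗ[ℝ] H₁) (K₂ : V₂ →ₗ[ℝ] H₂)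
    (hcompat : ∀ (f : V) (h₁ : f ∈ V₁) (h₂ : f ∈ V₂),
      ∃ hm : K₁ ⟨f, h₁⟩ ∈ O₁, (U ⟨K₁ ⟨f, h₁⟩, hm⟩ : H₂) = K₂ ⟨f, h₂⟩) :
    (∀ (f₁ g₁ : V₁) (f₂ g₂ : V₂), (f₁ : V) + (f₂ : V) = (g₁ : V) + (g₂ : V) →
      gluedForm O₁ O₂ U (K₁ f₁ - K₁ g₁, K₂ f₂ - K₂ g₂) (K₁ f₁ - K₁ g₁, K₂ f₂ - K₂ g₂) = 0
      ∧ gluedMap O₁ O₂ U (K₁ f₁, K₂ f₂) = gluedMap O₁ O₂ U (K₁ g₁, K₂ g₂))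
    ∧ ∃ Ktilde : ↥(V₁ ⊔ V₂) →ₗ[ℝ] H₁ × H₂ × H₂,
        ∀ (f₁ : V₁) (f₂ : V₂) (h : (f₁ : V) + (f₂ : V) ∈ V₁ ⊔ V₂),
          Ktilde ⟨(f₁ : V) + (f₂ : V), h⟩ = gluedMap O₁ O₂ U (K₁ f₁, K₂ f₂) := by
  -- Key fact for zero-sum pairs
  have hzero : ∀ (f₁ : V₁) (f₂ : V₂), (f₁ : V) + (f₂ : V) = 0 →
      ∃ hm : K₁ f₁ ∈ O₁, K₂ f₂ = -(U ⟨K₁ f₁, hm⟩ : H₂) := by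
    intro f₁ f₂ hs
    have h₂ : (f₁ : V) ∈ V₂ := by
      have h : (f₁ : V) = -(f₂ : V) := eq_neg_of_add_eq_zero_left hs
      rw [h]; exact neg_mem f₂.2
    obtain ⟨hm, hU⟩ := hcompat (f₁ : V) f₁.2 h₂
    have hf₂ : f₂ = -(⟨(f₁ : V), h₂⟩ : V₂) := by
      ext; simpa using eq_neg_of_add_eq_zero_right hs
    exact ⟨hm, by rw [hf₂, map_neg, ← hU]⟩
  have hΦ0 : ∀ (f₁ : V₁) (f₂ : V₂), (f₁ : V) + (f₂ : V) = 0 →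
      gluedMap O₁ O₂ U (K₁ f₁, K₂ f₂) = 0 := by
    intro f₁ f₂ hs
    obtain ⟨hm, hk⟩ := hzero f₁ f₂ hs
    have hm₂ : K₂ f₂ ∈ O₂ := by rw [hk]; exact neg_mem (U ⟨K₁ f₁, hm⟩).2
    have hp₁ : Submodule.orthogonalProjectionOnto O₁ (K₁ f₁) = ⟨K₁ f₁, hm⟩ :=
      Subtype.ext (Submodule.starProjection_eq_self_iff.mpr hm)
    have hp₂ : (Submodule.orthogonalProjectionOnto O₂ (K₂ f₂) : H₂) = K₂ f₂ :=
      Submodule.starProjection_eq_self_iff.mpr hm₂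
    simp [gluedMap, Prod.ext_iff, hp₁, hp₂, hk]
  have hB0 : ∀ (f₁ : V₁) (f₂ : V₂), (f₁ : V) + (f₂ : V) = 0 →
      gluedForm O₁ O₂ U (K₁ f₁, K₂ f₂) (K₁ f₁, K₂ f₂) = 0 := by
    intro f₁ f₂ hs
    obtain ⟨hm, hk⟩ := hzero f₁ f₂ hs
    have hm₂ : K₂ f₂ ∈ O₂ := by rw [hk]; exact neg_mem (U ⟨K₁ f₁, hm⟩).2
    have hp₁ : Submodule.orthogonalProjectionOnto O₁ (K₁ f₁) = ⟨K₁ f₁, hm⟩ :=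
      Subtype.ext (Submodule.starProjection_eq_self_iff.mpr hm)
    have hp₂ : Submodule.orthogonalProjectionOnto O₂ (K₂ f₂) = -(U ⟨K₁ f₁, hm⟩) := by
      apply Subtype.ext
      rw [show ((Submodule.orthogonalProjectionOnto O₂ (K₂ f₂)) : H₂) = K₂ f₂ from Submodule.starProjection_eq_self_iff.mpr hm₂, hk]
      rfl
    have hUU : ⟪(U ⟨K₁ f₁, hm⟩ : H₂), (U ⟨K₁ f₁, hm⟩ : H₂)⟫_ℂ = ⟪K₁ f₁, K₁ f₁⟫_ℂ := by
      rw [← Submodule.coe_inner, U.inner_map_map, Submodule.coe_inner]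
    have hpU : Submodule.orthogonalProjectionOnto O₂ ((U ⟨K₁ f₁, hm⟩ : O₂) : H₂) = U ⟨K₁ f₁, hm⟩ :=
      Subtype.ext (Submodule.starProjection_eq_self_iff.mpr (U ⟨K₁ f₁, hm⟩).2)
    simp only [gluedForm, hp₁, hp₂, hk, hpU, map_neg, LinearIsometryEquiv.symm_apply_apply,
      Submodule.coe_neg, inner_neg_neg, inner_neg_left, inner_neg_right, hUU]
    ring
  -- linearity of Φ in the difference
  have hΦsub : ∀ x y : H₁ × H₂, gluedMap O₁ O₂ U (x - y)
      = gluedMap O₁ O₂ U x - gluedMap O₁ O₂ U y :=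
    fun x y => map_sub (gluedMapₗ O₁ O₂ U) x y
  constructor
  · intro f₁ g₁ f₂ g₂ hsum
    have hs0 : ((f₁ - g₁ : V₁) : V) + ((f₂ - g₂ : V₂) : V) = 0 := by
      push_cast
      rw [sub_add_sub_comm, hsum, sub_self]
    constructor
    · have h := hB0 (f₁ - g₁) (f₂ - g₂) hs0
      rwa [map_sub, map_sub] at h
    · have h := hΦ0 (f₁ - g₁) (f₂ - g₂) hs0
      rw [map_sub, map_sub] at h
      rw [← sub_eq_zero, ← hΦsub]
      exact h
  · -- construct K̃ via a linear section of the sum map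
    set S : (V₁ × V₂) →ₗ[ℝ] V := (V₁.subtype).coprod (V₂.subtype) with hS
    have hmemS : ∀ p : V₁ × V₂, S p ∈ V₁ ⊔ V₂ := fun p =>
      Submodule.add_mem_sup p.1.2 p.2.2
    set S' : (V₁ × V₂) →ₗ[ℝ] ↥(V₁ ⊔ V₂) := S.codRestrict (V₁ ⊔ V₂) hmemS with hS'
    have hsurj : Function.Surjective S' := by
      rintro ⟨x, hx⟩
      obtain ⟨y, hy, z, hz, hyz⟩ := Submodule.mem_sup.mp hx
      exact ⟨(⟨y, hy⟩, ⟨z, hz⟩), Subtype.ext hyz⟩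
    haveI hproj : Module.Projective ℝ ↥(V₁ ⊔ V₂) :=
      Module.Projective.of_basis (Module.Basis.ofVectorSpace ℝ _)
    obtain ⟨σ, hσ⟩ := S'.exists_rightInverse_of_surjective (LinearMap.range_eq_top.mpr hsurj)
    set T : (V₁ × V₂) →ₗ[ℝ] H₁ × H₂ × H₂ :=
      ((gluedMapₗ O₁ O₂ U).restrictScalars ℝ).comp (K₁.prodMap K₂) with hT
    have hTker : ∀ p : V₁ × V₂, S p = 0 → T p = 0 := by
      intro p hp
      have hps : ((p.1 : V₁) : V) + ((p.2 : V₂) : V) = 0 := by simpa [hS] using hp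
      exact hΦ0 p.1 p.2 hps
    refine ⟨T.comp σ, ?_⟩
    intro f₁ f₂ h
    have hx : S' (σ ⟨(f₁ : V) + (f₂ : V), h⟩) = ⟨(f₁ : V) + (f₂ : V), h⟩ :=
      LinearMap.congr_fun hσ _
    have hSval : S (σ ⟨(f₁ : V) + (f₂ : V), h⟩) = (f₁ : V) + (f₂ : V) :=
      congrArg Subtype.val hx
    have hdiff : S (σ ⟨(f₁ : V) + (f₂ : V), h⟩ - (f₁, f₂)) = 0 := by
      rw [map_sub, hSval]
      simp [hS]
    have h0 := hTker _ hdiff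
    rw [map_sub, sub_eq_zero] at h0
    simpa [hT, gluedMapₗ] using h0

end
end
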